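/- Let V be a commutative unital quantale, (X,a) an L-complete V-category, and M ⊆ X an L-closed subset (cl(M) = M, where cl(M) = {x ∈ X | k ≤ ⋁_{y∈M} a(x,y) ⊗ a(y,x)}). Then M with the restricted structure a|_{M×M} is an L-complete V-category. -/

import Mathlib

/-- an L-closed subset `M` of an L-complete V-category `(X,a)` is itself
L-complete with the restricted structure. -/
theorem stmt15 {V : Type*} [CommMonoid V] [CompleteLattice V] [IsQuantale V]
    {X : Type*}
    (a : X → X → V) (ha1 : ∀ x, (1 : V) ≤ a x x)
    (ha2 : ∀ x y z, a x y * a y z ≤ a x z)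
    -- X is L-complete:
    (hX : ∀ ψ : X → V, (∀ x y, a x y * ψ y ≤ ψ x) →
      (∃ φ : X → V, (∀ x y, φ y * a y x ≤ φ x) ∧ (∀ x y, ψ x * φ y ≤ a x y) ∧
        (1 : V) ≤ ⨆ x : X, φ x * ψ x) →
      ∃ x₀ : X, ∀ x, ψ x = a x x₀)
    -- M is L-closed:
    (M : Set X)
    (hM : {x : X | (1 : V) ≤ ⨆ y ∈ M, a x y * a y x} = M) :
    -- M with the restricted structure is L-complete:
    ∀ ψ : M → V, (∀ x y : M, a x.1 y.1 * ψ y ≤ ψ x) →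
      (∃ φ : M → V, (∀ x y : M, φ y * a y.1 x.1 ≤ φ x) ∧
        (∀ x y : M, ψ x * φ y ≤ a x.1 y.1) ∧ (1 : V) ≤ ⨆ x : M, φ x * ψ x) →
      ∃ x₀ : M, ∀ x : M, ψ x = a x.1 x₀.1 := by
  intro ψ hψ ⟨φ, hφ, hadj, hunit⟩
  -- extend ψ and φ to X
  set ψ' : X → V := fun x => ⨆ m : M, a x m.1 * ψ m with hψ'def
  set φ' : X → V := fun x => ⨆ m : M, φ m * a m.1 x with hφ'def
  have hψ'le : ∀ (m : M), ψ' m.1 ≤ ψ m := by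
    intro m
    exact iSup_le fun n => hψ m n
  have hψ'ge : ∀ (m : M), ψ m ≤ ψ' m.1 := by
    intro m
    calc ψ m = 1 * ψ m := (one_mul _).symm
    _ ≤ a m.1 m.1 * ψ m := mul_le_mul_left (ha1 m.1) _
    _ ≤ ψ' m.1 := le_iSup (fun n : M => a m.1 n.1 * ψ n) m
  have hφ'ge : ∀ (m : M), φ m ≤ φ' m.1 := by
    intro m
    calc φ m = φ m * 1 := (mul_one _).symm
    _ ≤ φ m * a m.1 m.1 := mul_le_mul_right (ha1 m.1) _
    _ ≤ φ' m.1 := le_iSup (fun n : M => φ n * a n.1 m.1) m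
  have hmod : ∀ x y, a x y * ψ' y ≤ ψ' x := by
    intro x y
    rw [hψ'def, Quantale.mul_iSup_distrib]
    exact iSup_le fun m => le_trans (by rw [← mul_assoc]; exact mul_le_mul_left (ha2 x y m.1) _)
      (le_iSup (fun n : M => a x n.1 * ψ n) m)
  have hmod' : ∀ x y, φ' y * a y x ≤ φ' x := by
    intro x y
    rw [hφ'def, Quantale.iSup_mul_distrib]
    exact iSup_le fun m => le_trans (by rw [mul_assoc]; exact mul_le_mul_right (ha2 m.1 y x) _)
      (le_iSup (fun n : M => φ n * a n.1 x) m)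
  have hadj' : ∀ x y, ψ' x * φ' y ≤ a x y := by
    intro x y
    rw [hψ'def, hφ'def, Quantale.iSup_mul_distrib]
    refine iSup_le fun m => ?_
    rw [Quantale.mul_iSup_distrib]
    refine iSup_le fun n => ?_
    calc a x m.1 * ψ m * (φ n * a n.1 y)
        = a x m.1 * (ψ m * φ n) * a n.1 y := by rw [mul_assoc, mul_assoc, mul_assoc]
      _ ≤ a x m.1 * a m.1 n.1 * a n.1 y := by
          exact mul_le_mul_left (mul_le_mul_right (hadj m n) _) _
      _ ≤ a x n.1 * a n.1 y := mul_le_mul_left (ha2 _ _ _) _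
      _ ≤ a x y := ha2 _ _ _
  have hunit' : (1 : V) ≤ ⨆ x : X, φ' x * ψ' x := by
    refine le_trans hunit (iSup_le fun m => ?_)
    exact le_trans (mul_le_mul' (hφ'ge m) (hψ'ge m)) (le_iSup (fun x => φ' x * ψ' x) m.1)
  obtain ⟨x₀, hx₀⟩ := hX ψ' hmod ⟨φ', hmod', hadj', hunit'⟩
  have hx₀M : x₀ ∈ M := by
    rw [← hM]
    show (1 : V) ≤ ⨆ y ∈ M, a x₀ y * a y x₀
    refine le_trans (ha1 x₀) ?_
    rw [← hx₀ x₀, hψ'def]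
    refine iSup_le fun m => ?_
    have : a x₀ m.1 * a m.1 x₀ ≤ ⨆ y ∈ M, a x₀ y * a y x₀ :=
      le_trans (le_refl _) (le_iSup₂ (f := fun y (_ : y ∈ M) => a x₀ y * a y x₀) m.1 m.2)
    refine le_trans ?_ this
    rw [← hx₀ m.1]
    exact mul_le_mul_right (hψ'ge m) _
  refine ⟨⟨x₀, hx₀M⟩, fun m => ?_⟩
  have h1 := hx₀ m.1
  have : ψ m = ψ' m.1 := le_antisymm (hψ'ge m) (hψ'le m)
  rw [this, h1]
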